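/- arXiv:1411.7125 — 3 statements merged into one kernel-verified Lean document; each statement's English description precedes it below -/
import Mathlib

section
/- The regulator equations XS = AX + BU + E, 0 = CX + D have a solution (X, U) for all E, D if and only if for all λ ∈ σ(S), rank([A − λI, B; C, 0]) = n + p. -/
open Matrix

section RegAux

variable {n m p q : ℕ}

private lemma vecMul_smul_one {k : Type*} [Fintype k] [DecidableEq k] (μ : ℂ) (u : k → ℂ) :
    u ᵥ* (μ • (1 : Matrix k k ℂ)) = μ • u := by
  have h : (μ • (1 : Matrix k k ℂ))ᵀ = μ • 1 := by
    rw [Matrix.transpose_smul, Matrix.transpose_one]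
  rw [← Matrix.mulVec_transpose, h, Matrix.smul_mulVec, Matrix.one_mulVec]

private lemma trace_test {a b : Type*} [Fintype a] [Fintype b] [DecidableEq a] [DecidableEq b]
    {M : Matrix a b ℂ} (h : ∀ X : Matrix b a ℂ, (M * X).trace = 0) : M = 0 := by
  ext i j
  have hh := h (Matrix.single j i 1)
  simpa [Matrix.trace, Matrix.diag, Matrix.mul_apply, Matrix.single, Matrix.of_apply,
    ite_and, mul_ite, mul_one, mul_zero, Finset.sum_ite_eq', Finset.sum_ite_eq] using hh

private lemma trace_sum_repr (φ : (Matrix (Fin n) (Fin q) ℂ × Matrix (Fin p) (Fin q) ℂ) →ₗ[ℂ] ℂ)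
    (P : Matrix (Fin n) (Fin q) ℂ) (Q : Matrix (Fin p) (Fin q) ℂ) :
    φ (P, Q) = ((Matrix.of fun j i => φ (Matrix.single i j 1, 0)) * P).trace
      + ((Matrix.of fun j k => φ (0, Matrix.single k j 1)) * Q).trace := by
  have hPQ : (P, Q) = (∑ i : Fin n, ∑ j : Fin q,
        P i j • (Matrix.single i j 1, (0 : Matrix (Fin p) (Fin q) ℂ)))
      + (∑ k : Fin p, ∑ j : Fin q,
        Q k j • ((0 : Matrix (Fin n) (Fin q) ℂ), Matrix.single k j 1)) := by
    refine Prod.ext ?_ ?_ <;>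
      simp [Prod.fst_sum, Prod.snd_sum, Matrix.smul_single, smul_eq_mul, mul_one] <;>
      exact Matrix.matrix_eq_sum_single _
  rw [hPQ, map_add, map_sum, map_sum]
  simp only [map_sum, LinearMap.map_smul, smul_eq_mul]
  have h1 : ((Matrix.of fun j i => φ (Matrix.single i j 1, 0)) * P).trace
      = ∑ i : Fin n, ∑ j : Fin q, P i j * φ (Matrix.single i j 1, 0) := by
    simp only [Matrix.trace, Matrix.diag, Matrix.mul_apply, Matrix.of_apply]
    rw [Finset.sum_comm]
    exact Finset.sum_congr rfl fun i _ => Finset.sum_congr rfl fun j _ => mul_comm _ _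
  have h2 : ((Matrix.of fun j k => φ (0, Matrix.single k j 1)) * Q).trace
      = ∑ k : Fin p, ∑ j : Fin q, Q k j * φ (0, Matrix.single k j 1) := by
    simp only [Matrix.trace, Matrix.diag, Matrix.mul_apply, Matrix.of_apply]
    rw [Finset.sum_comm]
    exact Finset.sum_congr rfl fun i _ => Finset.sum_congr rfl fun j _ => mul_comm _ _
  rw [h1, h2]

/-- Complex surjectivity of the regulator equations from the left-null-vector condition. -/
private lemma complex_surj (A : Matrix (Fin n) (Fin n) ℂ) (B : Matrix (Fin n) (Fin m) ℂ)
    (C : Matrix (Fin p) (Fin n) ℂ) (S : Matrix (Fin q) (Fin q) ℂ)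
    (hrank : ∀ μ ∈ spectrum ℂ S, ∀ r : Fin n ⊕ Fin p → ℂ,
      r ᵥ* (Matrix.fromBlocks (A - μ • 1) B C (0 : Matrix (Fin p) (Fin m) ℂ)) = 0 → r = 0)
    (E : Matrix (Fin n) (Fin q) ℂ) (D : Matrix (Fin p) (Fin q) ℂ) :
    ∃ (X : Matrix (Fin n) (Fin q) ℂ) (U : Matrix (Fin m) (Fin q) ℂ),
      X * S = A * X + B * U + E ∧ C * X + D = 0 := by
  classical
  let f : (Matrix (Fin n) (Fin q) ℂ × Matrix (Fin m) (Fin q) ℂ) →ₗ[ℂ]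
      (Matrix (Fin n) (Fin q) ℂ × Matrix (Fin p) (Fin q) ℂ) :=
    { toFun := fun XU => (XU.1 * S - A * XU.1 - B * XU.2, C * XU.1)
      map_add' := by
        rintro ⟨X, U⟩ ⟨X', U'⟩
        simp only [Prod.mk_add_mk, Matrix.add_mul, Matrix.mul_add, Prod.mk.injEq,
          and_true, true_and]
        abel
      map_smul' := by
        rintro c ⟨X, U⟩
        simp only [Prod.smul_mk, Matrix.smul_mul, Matrix.mul_smul, RingHom.id_apply,
          Prod.mk.injEq, smul_sub]
        try exact ⟨rfl, rfl⟩ }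
  suffices hsurj : Function.Surjective f by
    obtain ⟨⟨X, U⟩, hXU⟩ := hsurj (E, -D)
    rw [Prod.ext_iff] at hXU
    obtain ⟨h1, h2⟩ := hXU
    have h1' : X * S - A * X - B * U = E := h1
    have h2' : C * X = -D := h2
    refine ⟨X, U, ?_, ?_⟩
    · rw [← h1']; abel
    · rw [h2']; abel
  rw [← LinearMap.range_eq_top]
  by_contra hne
  obtain ⟨y, hy⟩ : ∃ y, y ∉ LinearMap.range f := by
    by_contra h
    push_neg at h
    exact hne (Submodule.eq_top_iff'.mpr h)
  have hπy : (LinearMap.range f).mkQ y ≠ 0 := by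
    rw [Submodule.mkQ_apply, ne_eq, Submodule.Quotient.mk_eq_zero]
    exact hy
  obtain ⟨ψ, hψ⟩ : ∃ ψ : Module.Dual ℂ
      ((Matrix (Fin n) (Fin q) ℂ × Matrix (Fin p) (Fin q) ℂ) ⧸ LinearMap.range f),
      ψ ((LinearMap.range f).mkQ y) ≠ 0 := by
    by_contra h
    push_neg at h
    exact hπy ((Module.forall_dual_apply_eq_zero_iff ℂ _).mp h)
  set φ : (Matrix (Fin n) (Fin q) ℂ × Matrix (Fin p) (Fin q) ℂ) →ₗ[ℂ] ℂ :=
    ψ ∘ₗ (LinearMap.range f).mkQ with hφdef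
  have hφf : ∀ x, φ (f x) = 0 := by
    intro x
    have hx : (LinearMap.range f).mkQ (f x) = 0 := by
      rw [Submodule.mkQ_apply, Submodule.Quotient.mk_eq_zero]
      exact ⟨x, rfl⟩
    simp [hφdef, LinearMap.comp_apply, hx]
  set W : Matrix (Fin q) (Fin n) ℂ := Matrix.of fun j i => φ (Matrix.single i j 1, 0) with hWdef
  set V : Matrix (Fin q) (Fin p) ℂ := Matrix.of fun j k => φ (0, Matrix.single k j 1) with hVdef
  have hrep : ∀ P Q', φ (P, Q') = (W * P).trace + (V * Q').trace :=
    fun P Q' => trace_sum_repr φ P Q'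
  -- matrix equations for W, V
  have heq1 : S * W - W * A + V * C = 0 := by
    apply trace_test
    intro X
    have h := hφf (X, 0)
    simp only [f, LinearMap.coe_mk, AddHom.coe_mk, Matrix.mul_zero, sub_zero] at h
    rw [hrep] at h
    have htr : (W * (X * S - A * X)).trace + (V * (C * X)).trace
        = ((S * W - W * A + V * C) * X).trace := by
      simp only [Matrix.mul_sub, Matrix.add_mul, Matrix.sub_mul, Matrix.trace_sub,
        Matrix.trace_add, ← Matrix.mul_assoc]
      rw [Matrix.trace_mul_cycle W X S]
    rw [htr] at h
    exact h
  have heq2 : W * B = 0 := by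
    apply trace_test
    intro U
    have h := hφf (0, U)
    simp only [f, LinearMap.coe_mk, AddHom.coe_mk, Matrix.zero_mul, Matrix.mul_zero,
      zero_sub, sub_zero] at h
    rw [hrep] at h
    simp only [Matrix.mul_zero, Matrix.trace_zero, add_zero, Matrix.mul_neg,
      Matrix.trace_neg, neg_eq_zero, ← Matrix.mul_assoc] at h
    exact h
  -- the key nullity claim via generalized eigenspaces of Sᵀ
  have key : ∀ u : Fin q → ℂ, u ᵥ* W = 0 ∧ u ᵥ* V = 0 := by
    have hind : ∀ μ : ℂ, ∀ k : ℕ, ∀ u : Fin q → ℂ,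
        ((Sᵀ - μ • 1) ^ k) *ᵥ u = 0 → u ᵥ* W = 0 ∧ u ᵥ* V = 0 := by
      intro μ k
      induction k with
      | zero =>
        intro u hu
        simp only [pow_zero, Matrix.one_mulVec] at hu
        simp [hu]
      | succ k ih =>
        intro u hu
        by_cases hu0 : u = 0
        · simp [hu0]
        have hμ : μ ∈ spectrum ℂ S := by
          rw [spectrum.mem_iff]
          intro hunit
          rw [Algebra.algebraMap_eq_smul_one] at hunit
          have h2 : IsUnit ((μ • (1 : Matrix (Fin q) (Fin q) ℂ) - S)ᵀ) :=
            (Matrix.isUnit_transpose _).mpr hunit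
          have h3 : (μ • (1 : Matrix (Fin q) (Fin q) ℂ) - S)ᵀ = μ • 1 - Sᵀ := by
            rw [Matrix.transpose_sub, Matrix.transpose_smul, Matrix.transpose_one]
          rw [h3] at h2
          have h4 : Sᵀ - μ • (1 : Matrix (Fin q) (Fin q) ℂ) = -(μ • 1 - Sᵀ) := by
            rw [neg_sub]
          have h1 : IsUnit (Sᵀ - μ • (1 : Matrix (Fin q) (Fin q) ℂ)) := by
            rw [h4]; exact h2.neg
          have h5 : IsUnit ((Sᵀ - μ • (1 : Matrix (Fin q) (Fin q) ℂ)) ^ (k + 1)) := h1.pow _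
          have h6 := Matrix.mulVec_injective_iff_isUnit.mpr h5
          apply hu0
          apply h6
          rw [hu, Matrix.mulVec_zero]
        set u' := (Sᵀ - μ • 1) *ᵥ u with hu'def
        have hu'k : ((Sᵀ - μ • 1) ^ k) *ᵥ u' = 0 := by
          rw [hu'def, Matrix.mulVec_mulVec, ← pow_succ]
          exact hu
        obtain ⟨hW', hV'⟩ := ih u' hu'k
        have hxS : u ᵥ* S = μ • u + u' := by
          have h9 : u' = u ᵥ* S - μ • u := by
            rw [hu'def, Matrix.sub_mulVec, Matrix.smul_mulVec, Matrix.one_mulVec,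
              Matrix.mulVec_transpose]
          rw [h9]; abel
        have hSW : u ᵥ* (S * W) = μ • (u ᵥ* W) := by
          rw [← Matrix.vecMul_vecMul, hxS, Matrix.add_vecMul, Matrix.smul_vecMul, hW', add_zero]
        have h7 : μ • (u ᵥ* W) = (u ᵥ* W) ᵥ* A - (u ᵥ* V) ᵥ* C := by
          rw [← hSW]
          have hSWe : S * W = W * A - V * C := by
            have : S * W - W * A + V * C + (W * A - V * C) = 0 + (W * A - V * C) := by
              rw [heq1]
            rw [zero_add] at this
            rw [← this]; abel
          rw [hSWe, Matrix.vecMul_sub, Matrix.vecMul_vecMul, Matrix.vecMul_vecMul]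
        have hB : (u ᵥ* W) ᵥ* B = 0 := by
          rw [Matrix.vecMul_vecMul, heq2, Matrix.vecMul_zero]
        set r : Fin n ⊕ Fin p → ℂ := Sum.elim (u ᵥ* W) (-(u ᵥ* V)) with hrdef
        have hr0 : r ᵥ* Matrix.fromBlocks (A - μ • 1) B C (0 : Matrix (Fin p) (Fin m) ℂ)
            = 0 := by
          rw [Matrix.vecMul_fromBlocks]
          have hcl : r ∘ Sum.inl = u ᵥ* W := rfl
          have hcr : r ∘ Sum.inr = -(u ᵥ* V) := rfl
          rw [hcl, hcr]
          have e1 : (u ᵥ* W) ᵥ* (A - μ • 1) + (-(u ᵥ* V)) ᵥ* C = 0 := by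
            rw [Matrix.vecMul_sub, vecMul_smul_one, Matrix.neg_vecMul]
            have : (u ᵥ* W) ᵥ* A - μ • (u ᵥ* W) + -((u ᵥ* V) ᵥ* C)
                = ((u ᵥ* W) ᵥ* A - (u ᵥ* V) ᵥ* C) - μ • (u ᵥ* W) := by abel
            rw [this, ← h7, sub_self]
          have e2 : (u ᵥ* W) ᵥ* B + (-(u ᵥ* V)) ᵥ* (0 : Matrix (Fin p) (Fin m) ℂ) = 0 := by
            rw [hB, Matrix.vecMul_zero, add_zero]
          rw [e1, e2]
          funext x; cases x <;> rfl
        have hr := hrank μ hμ r hr0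
        rw [hrdef] at hr
        constructor
        · funext i
          have := congrFun hr (Sum.inl i)
          simpa using this
        · funext k'
          have := congrFun hr (Sum.inr k')
          simpa [neg_eq_zero] using this
    intro u
    set g : Module.End ℂ (Fin q → ℂ) := Matrix.toLinAlgEquiv' Sᵀ with hgdef
    have htop := Module.End.iSup_maxGenEigenspace_eq_top g
    have hu : u ∈ ⨆ μ : ℂ, Module.End.maxGenEigenspace g μ := by
      rw [htop]; trivial
    refine Submodule.iSup_induction (motive := fun u => u ᵥ* W = 0 ∧ u ᵥ* V = 0) _ hu ?_ ?_ ?_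
    · intro μ x hx
      obtain ⟨k, hk⟩ := (Module.End.mem_maxGenEigenspace _ _ _).mp hx
      apply hind μ k
      have hconv : (g - μ • 1) ^ k = Matrix.toLinAlgEquiv' ((Sᵀ - μ • 1) ^ k) := by
        have hone : (Matrix.toLinAlgEquiv' : Matrix (Fin q) (Fin q) ℂ ≃ₐ[ℂ] _) 1 = 1 :=
          _root_.map_one _
        rw [hgdef, map_pow, map_sub, _root_.map_smul, hone]
      rw [hconv] at hk
      rw [Matrix.toLinAlgEquiv'_apply] at hk
      exact hk
    · constructor <;> exact Matrix.zero_vecMul _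
    · rintro x y ⟨hx1, hx2⟩ ⟨hy1, hy2⟩
      constructor <;> rw [Matrix.add_vecMul] <;> simp [hx1, hx2, hy1, hy2]
  have hW0 : W = 0 := by
    ext j i
    have h := congrFun (key (Pi.single j 1)).1 i
    simpa [Matrix.vecMul, dotProduct, Pi.single_apply, ite_mul, one_mul, zero_mul,
      Finset.sum_ite_eq, Finset.sum_ite_eq'] using h
  have hV0 : V = 0 := by
    ext j k'
    have h := congrFun (key (Pi.single j 1)).2 k'
    simpa [Matrix.vecMul, dotProduct, Pi.single_apply, ite_mul, one_mul, zero_mul,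
      Finset.sum_ite_eq, Finset.sum_ite_eq'] using h
  have hφ0 : φ (y.1, y.2) = 0 := by
    rw [hrep, hW0, hV0]
    simp
  exact hψ hφ0

end RegAux

theorem stmt_14 (n m p q : ℕ)
    (A : Matrix (Fin n) (Fin n) ℝ) (B : Matrix (Fin n) (Fin m) ℝ)
    (C : Matrix (Fin p) (Fin n) ℝ) (S : Matrix (Fin q) (Fin q) ℝ) :
    (∀ (E : Matrix (Fin n) (Fin q) ℝ) (D : Matrix (Fin p) (Fin q) ℝ),
        ∃ (X : Matrix (Fin n) (Fin q) ℝ) (U : Matrix (Fin m) (Fin q) ℝ),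
          X * S = A * X + B * U + E ∧ C * X + D = 0) ↔
      ∀ μ ∈ spectrum ℂ (S.map (algebraMap ℝ ℂ)),
        (Matrix.fromBlocks (A.map (algebraMap ℝ ℂ) - μ • 1) (B.map (algebraMap ℝ ℂ))
            (C.map (algebraMap ℝ ℂ)) 0).rank = n + p := by
  classical
  set Ac := A.map (algebraMap ℝ ℂ) with hAc
  set Bc := B.map (algebraMap ℝ ℂ) with hBc
  set Cc := C.map (algebraMap ℝ ℂ) with hCc
  set Sc := S.map (algebraMap ℝ ℂ) with hSc
  constructor
  · -- solvability ⟹ rank condition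
    intro hsol μ hμ
    set M : Matrix (Fin n ⊕ Fin p) (Fin n ⊕ Fin m) ℂ :=
      Matrix.fromBlocks (Ac - μ • 1) Bc Cc 0 with hM
    -- an eigenvector of Sc
    have hdet : ((μ • 1 : Matrix (Fin q) (Fin q) ℂ) - Sc).det = 0 := by
      have h1 := spectrum.mem_iff.mp hμ
      rw [Algebra.algebraMap_eq_smul_one] at h1
      by_contra hd
      exact h1 ((Matrix.isUnit_iff_isUnit_det _).mpr (isUnit_iff_ne_zero.mpr hd))
    obtain ⟨v, hv0, hv⟩ := (Matrix.exists_mulVec_eq_zero_iff).mpr hdet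
    have hSv : Sc *ᵥ v = μ • v := by
      rw [Matrix.sub_mulVec, Matrix.smul_mulVec, Matrix.one_mulVec, sub_eq_zero] at hv
      exact hv.symm
    obtain ⟨j0, hvj0⟩ : ∃ j0, v j0 ≠ 0 := Function.ne_iff.mp hv0
    -- every left null vector of M is zero
    have hnull : ∀ r : Fin n ⊕ Fin p → ℂ, r ᵥ* M = 0 → r = 0 := by
      intro r hr
      set w : Fin n → ℂ := r ∘ Sum.inl with hw
      set z : Fin p → ℂ := r ∘ Sum.inr with hz
      rw [hM, Matrix.vecMul_fromBlocks] at hr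
      have hA : w ᵥ* (Ac - μ • 1) + z ᵥ* Cc = 0 := by
        funext i; simpa using congrFun hr (Sum.inl i)
      have hBz : w ᵥ* Bc = 0 := by
        funext i
        have := congrFun hr (Sum.inr i)
        simpa [Matrix.vecMul_zero] using this
      -- key scalar identity for every real E, D
      have hkey : ∀ (E : Matrix (Fin n) (Fin q) ℝ) (D : Matrix (Fin p) (Fin q) ℝ),
          w ⬝ᵥ ((E.map (algebraMap ℝ ℂ)) *ᵥ v) + z ⬝ᵥ ((D.map (algebraMap ℝ ℂ)) *ᵥ v) = 0 := by
        intro E D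
        obtain ⟨X, U, h1, h2⟩ := hsol E D
        -- complexify the equations
        have h1c : (X.map (algebraMap ℝ ℂ)) * Sc
            = Ac * (X.map (algebraMap ℝ ℂ)) + Bc * (U.map (algebraMap ℝ ℂ))
              + E.map (algebraMap ℝ ℂ) := by
          ext i j
          have hij := congrArg (algebraMap ℝ ℂ) (congrFun (congrFun h1 i) j)
          simpa [Matrix.mul_apply, Matrix.add_apply, Matrix.map_apply, map_sum, _root_.map_mul,
            map_add, hSc, hAc, hBc] using hij
        have h2c : Cc * (X.map (algebraMap ℝ ℂ)) + D.map (algebraMap ℝ ℂ) = 0 := by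
          ext i j
          have hij := congrArg (algebraMap ℝ ℂ) (congrFun (congrFun h2 i) j)
          simpa [Matrix.mul_apply, Matrix.add_apply, Matrix.map_apply, map_sum, _root_.map_mul,
            map_add, hCc] using hij
        set Xc := X.map (algebraMap ℝ ℂ)
        set Uc := U.map (algebraMap ℝ ℂ)
        set Ec := E.map (algebraMap ℝ ℂ)
        set Dc := D.map (algebraMap ℝ ℂ)
        set s : Fin n → ℂ := Xc *ᵥ v with hs
        set t : Fin m → ℂ := Uc *ᵥ v with ht
        -- dot the first equation with w and v
        have h3 : w ᵥ* (Ac - μ • 1) = -(z ᵥ* Cc) := by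
          rw [← sub_eq_zero]
          have h3' : w ᵥ* (Ac - μ • 1) - -(z ᵥ* Cc) = w ᵥ* (Ac - μ • 1) + z ᵥ* Cc := by abel
          rw [h3', hA]
        rw [Matrix.vecMul_sub, vecMul_smul_one] at h3
        have h4 : w ᵥ* Ac = μ • w - z ᵥ* Cc := by
          rw [← sub_eq_zero]
          have h4' : w ᵥ* Ac - (μ • w - z ᵥ* Cc)
              = (w ᵥ* Ac - μ • w) - -(z ᵥ* Cc) := by abel
          rw [h4', h3, sub_self]
        have h5 : Cc * Xc = -Dc := by
          rw [← sub_eq_zero]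
          have h5' : Cc * Xc - -Dc = Cc * Xc + Dc := by abel
          rw [h5', h2c]
        have hLHS : w ⬝ᵥ ((Xc * Sc) *ᵥ v) = μ * ((w ᵥ* Xc) ⬝ᵥ v) := by
          rw [← Matrix.mulVec_mulVec, hSv, Matrix.mulVec_smul, dotProduct_smul,
            smul_eq_mul, Matrix.dotProduct_mulVec]
        have hRHS : w ⬝ᵥ ((Ac * Xc + Bc * Uc + Ec) *ᵥ v)
            = ((w ᵥ* Ac) ᵥ* Xc) ⬝ᵥ v + ((w ᵥ* Bc) ᵥ* Uc) ⬝ᵥ v + (w ᵥ* Ec) ⬝ᵥ v := by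
          simp only [Matrix.add_mulVec, dotProduct_add, ← Matrix.mulVec_mulVec,
            Matrix.dotProduct_mulVec]
        have hEq : μ * ((w ᵥ* Xc) ⬝ᵥ v)
            = ((w ᵥ* Ac) ᵥ* Xc) ⬝ᵥ v + ((w ᵥ* Bc) ᵥ* Uc) ⬝ᵥ v + (w ᵥ* Ec) ⬝ᵥ v := by
          rw [← hLHS, h1c, hRHS]
        simp only [hBz, Matrix.zero_vecMul, zero_dotProduct, add_zero] at hEq
        simp only [h4, Matrix.sub_vecMul, Matrix.smul_vecMul, sub_dotProduct,
          smul_dotProduct, smul_eq_mul, Matrix.vecMul_vecMul, h5, Matrix.vecMul_neg,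
          neg_dotProduct] at hEq
        rw [Matrix.dotProduct_mulVec, Matrix.dotProduct_mulVec]
        linear_combination -hEq
      -- specialize to single-entry matrices
      have hw0 : ∀ i, w i = 0 := by
        intro i
        have h := hkey (Matrix.single i j0 1) 0
        have hmap : (Matrix.single i j0 (1:ℝ)).map (algebraMap ℝ ℂ)
            = Matrix.single i j0 (1:ℂ) := by
          ext a b
          simp [Matrix.map_apply, Matrix.single, Matrix.of_apply,
            apply_ite (algebraMap ℝ ℂ), apply_ite Complex.ofReal, Complex.ofReal_one,
            Complex.ofReal_zero]
        rw [hmap] at h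
        have hzero : ((0 : Matrix (Fin p) (Fin q) ℝ)).map (algebraMap ℝ ℂ) = 0 := by
          ext a b; simp
        rw [hzero, Matrix.zero_mulVec, dotProduct_zero, add_zero] at h
        have hcomp : w ⬝ᵥ (Matrix.single i j0 (1:ℂ) *ᵥ v) = w i * v j0 := by
          simp [dotProduct, Matrix.mulVec, Matrix.single, Matrix.of_apply,
            ite_and, mul_ite, mul_zero, mul_one, Finset.sum_ite_eq, Finset.sum_ite_eq',
            Finset.mul_sum, mul_assoc]
        rw [hcomp] at h
        rcases mul_eq_zero.mp h with h' | h'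
        · exact h'
        · exact absurd h' hvj0
      have hz0 : ∀ k', z k' = 0 := by
        intro k'
        have h := hkey 0 (Matrix.single k' j0 1)
        have hmap : (Matrix.single k' j0 (1:ℝ)).map (algebraMap ℝ ℂ)
            = Matrix.single k' j0 (1:ℂ) := by
          ext a b
          simp [Matrix.map_apply, Matrix.single, Matrix.of_apply,
            apply_ite (algebraMap ℝ ℂ), apply_ite Complex.ofReal, Complex.ofReal_one,
            Complex.ofReal_zero]
        rw [hmap] at h
        have hzero : ((0 : Matrix (Fin n) (Fin q) ℝ)).map (algebraMap ℝ ℂ) = 0 := by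
          ext a b; simp
        rw [hzero, Matrix.zero_mulVec, dotProduct_zero, zero_add] at h
        have hcomp : z ⬝ᵥ (Matrix.single k' j0 (1:ℂ) *ᵥ v) = z k' * v j0 := by
          simp [dotProduct, Matrix.mulVec, Matrix.single, Matrix.of_apply,
            ite_and, mul_ite, mul_zero, mul_one, Finset.sum_ite_eq, Finset.sum_ite_eq',
            Finset.mul_sum, mul_assoc]
        rw [hcomp] at h
        rcases mul_eq_zero.mp h with h' | h'
        · exact h'
        · exact absurd h' hvj0
      funext x
      cases x with
      | inl i => exact hw0 i
      | inr k' => exact hz0 k'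
    -- conclude full row rank
    have hinj : Function.Injective M.vecMul := by
      intro r1 r2 h12
      have hsub : (r1 - r2) ᵥ* M = 0 := by
        rw [Matrix.sub_vecMul, sub_eq_zero]
        exact h12
      have := hnull _ hsub
      exact sub_eq_zero.mp this
    have hli : LinearIndependent ℂ (fun i => M i) := Matrix.vecMul_injective_iff.mp hinj
    have hrank := LinearIndependent.rank_matrix (M := M) hli
    rw [hM] at hrank
    rw [hrank]
    simp [Fintype.card_sum]
  · -- rank condition ⟹ solvability
    intro hrk E D
    have hnull : ∀ μ ∈ spectrum ℂ Sc, ∀ r : Fin n ⊕ Fin p → ℂ,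
        r ᵥ* (Matrix.fromBlocks (Ac - μ • 1) Bc Cc (0 : Matrix (Fin p) (Fin m) ℂ)) = 0
          → r = 0 := by
      intro μ hμ r hr
      set M : Matrix (Fin n ⊕ Fin p) (Fin n ⊕ Fin m) ℂ :=
        Matrix.fromBlocks (Ac - μ • 1) Bc Cc 0 with hM
      have h1 := hrk μ hμ
      have hli : LinearIndependent ℂ (fun i => M i) := by
        rw [linearIndependent_iff_card_eq_finrank_span]
        have h2 : M.rank = Module.finrank ℂ (Submodule.span ℂ (Set.range M)) :=
          Matrix.rank_eq_finrank_span_row M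
        have h3 : Fintype.card (Fin n ⊕ Fin p) = M.rank := by
          rw [h1]; simp [Fintype.card_sum]
        rw [h3, h2]
        rfl
      have hinj : Function.Injective M.vecMul := Matrix.vecMul_injective_iff.mpr hli
      have : M.vecMul r = M.vecMul 0 := by
        show r ᵥ* M = (0 : Fin n ⊕ Fin p → ℂ) ᵥ* M
        rw [hr, Matrix.zero_vecMul]
      exact hinj this
    obtain ⟨Xc, Uc, h1, h2⟩ := complex_surj Ac Bc Cc Sc hnull
      (E.map (algebraMap ℝ ℂ)) (D.map (algebraMap ℝ ℂ))
    refine ⟨Xc.map Complex.re, Uc.map Complex.re, ?_, ?_⟩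
    · ext i j
      have hij := congrArg Complex.re (congrFun (congrFun h1 i) j)
      simp only [Matrix.mul_apply, Matrix.add_apply, Matrix.map_apply, Complex.add_re,
        Complex.re_sum, Complex.mul_re, Complex.ofReal_re, Complex.ofReal_im, mul_zero,
        zero_mul, sub_zero, zero_sub, hAc, hBc, hCc, hSc] at hij
      simpa [Matrix.mul_apply, Matrix.add_apply, Matrix.map_apply] using hij
    · ext i j
      have hij := congrArg Complex.re (congrFun (congrFun h2 i) j)
      simp only [Matrix.mul_apply, Matrix.add_apply, Matrix.map_apply, Complex.add_re,
        Complex.re_sum, Complex.mul_re, Complex.ofReal_re, Complex.ofReal_im, mul_zero,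
        zero_mul, sub_zero, zero_sub, Matrix.zero_apply, Complex.zero_re, hAc, hBc, hCc,
        hSc] at hij
      simpa [Matrix.mul_apply, Matrix.add_apply, Matrix.map_apply] using hij
end

section
/- Let L₁ ∈ ℝ^{m×m} be symmetric positive definite, P̃ ∈ ℝ^{q×q} symmetric positive definite satisfying P̃Sᵀ + SP̃ + I − P̃FᵀFP̃ = 0. Then there exists α₀ > 0 such that for all α ≥ α₀, the matrix L₁ ⊗ (P̃⁻¹S + SᵀP̃⁻¹) − (2α+1) L₁² ⊗ FᵀF is negative definite. -/
open Matrix Kronecker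

section Aux17

variable {a b : ℕ}

private lemma sub_kron17 (A B : Matrix (Fin a) (Fin a) ℝ) (C : Matrix (Fin b) (Fin b) ℝ) :
    (A - B) ⊗ₖ C = A ⊗ₖ C - B ⊗ₖ C := by
  ext ⟨i, k⟩ ⟨j, l⟩
  simp [Matrix.kroneckerMap_apply, sub_mul]

private lemma kron_sub17 (A : Matrix (Fin a) (Fin a) ℝ) (B C : Matrix (Fin b) (Fin b) ℝ) :
    A ⊗ₖ (B - C) = A ⊗ₖ B - A ⊗ₖ C := by
  ext ⟨i, k⟩ ⟨j, l⟩
  simp [Matrix.kroneckerMap_apply, mul_sub]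

private lemma psd_kron17 {A : Matrix (Fin a) (Fin a) ℝ} {B : Matrix (Fin b) (Fin b) ℝ}
    (hA : A.PosSemidef) (hB : B.PosSemidef) : (A ⊗ₖ B).PosSemidef := by
  exact Matrix.PosSemidef.kronecker hA hB

private lemma pd_of_psd17 {n : Type*} [Fintype n] [DecidableEq n]
    {M : Matrix n n ℝ} (hM : M.PosSemidef)
    (hd : IsUnit M.det) : M.PosDef := by
  refine Matrix.PosDef.of_dotProduct_mulVec_pos hM.1 fun x hx => ?_
  rcases lt_or_eq_of_le (hM.dotProduct_mulVec_nonneg x) with h | h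
  · simpa using h
  · exfalso
    have h0 : M *ᵥ x = 0 := (hM.dotProduct_mulVec_zero_iff x).mp h.symm
    have : x = 0 := by
      have := congrArg (fun v => M⁻¹ *ᵥ v) h0
      simpa [Matrix.mulVec_mulVec, Matrix.nonsing_inv_mul M hd] using this
    exact hx this

private lemma pd_kron17 {A : Matrix (Fin a) (Fin a) ℝ} {B : Matrix (Fin b) (Fin b) ℝ}
    (hA : A.PosDef) (hB : B.PosDef) : (A ⊗ₖ B).PosDef := by
  have hpsd := psd_kron17 hA.posSemidef hB.posSemidef
  refine pd_of_psd17 hpsd ?_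
  rw [Matrix.det_kronecker]
  exact (mul_pos (pow_pos hA.det_pos _) (pow_pos hB.det_pos _)).ne'.isUnit

/-- quadratic form bound: x ⬝ᵥ B *ᵥ x ≤ (∑∑|Bij|) * (x ⬝ᵥ x) -/
private lemma quad_bound17 (B : Matrix (Fin a) (Fin a) ℝ) (x : Fin a → ℝ) :
    x ⬝ᵥ B *ᵥ x ≤ (∑ i, ∑ j, |B i j|) * (x ⬝ᵥ x) := by
  set C := ∑ i, ∑ j, |B i j| with hC
  have hrow : ∀ i : Fin a, (∑ j, |B i j|) ≤ C := by
    intro i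
    exact Finset.single_le_sum (f := fun i => ∑ j, |B i j|)
      (fun k _ => Finset.sum_nonneg fun _ _ => abs_nonneg _) (Finset.mem_univ i)
  have hcol : ∀ j : Fin a, (∑ i, |B i j|) ≤ C := by
    intro j
    have hcomm : (∑ i, ∑ k, |B i k|) = ∑ k, ∑ i, |B i k| := Finset.sum_comm
    rw [hC, hcomm]
    exact Finset.single_le_sum (f := fun k => ∑ i, |B i k|)
      (fun k _ => Finset.sum_nonneg fun _ _ => abs_nonneg _) (Finset.mem_univ j)
  have h1 : x ⬝ᵥ B *ᵥ x = ∑ i, ∑ j, x i * (B i j * x j) := by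
    simp [dotProduct, Matrix.mulVec, Finset.mul_sum]
  rw [h1]
  have h2 : ∀ i j : Fin a, x i * (B i j * x j) ≤ |B i j| * ((x i)^2 + (x j)^2) / 2 := by
    intro i j
    have e : |x i * (B i j * x j)| = |B i j| * (|x i| * |x j|) := by
      rw [abs_mul, abs_mul]; ring
    have h3 : |x i| * |x j| ≤ ((x i)^2 + (x j)^2) / 2 := by
      nlinarith [sq_nonneg (|x i| - |x j|), sq_abs (x i), sq_abs (x j)]
    calc x i * (B i j * x j) ≤ |x i * (B i j * x j)| := le_abs_self _
      _ = |B i j| * (|x i| * |x j|) := e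
      _ ≤ |B i j| * (((x i)^2 + (x j)^2) / 2) := by
          exact mul_le_mul_of_nonneg_left h3 (abs_nonneg _)
      _ = |B i j| * ((x i)^2 + (x j)^2) / 2 := by ring
  have T1 : ∑ i, ∑ j, |B i j| * (x i)^2 ≤ C * (x ⬝ᵥ x) := by
    calc ∑ i, ∑ j, |B i j| * (x i)^2
        = ∑ i, (∑ j, |B i j|) * (x i)^2 :=
          Finset.sum_congr rfl fun i _ => (Finset.sum_mul _ _ _).symm
      _ ≤ ∑ i, C * (x i)^2 :=
          Finset.sum_le_sum fun i _ => mul_le_mul_of_nonneg_right (hrow i) (sq_nonneg _)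
      _ = C * (x ⬝ᵥ x) := by simp [dotProduct, Finset.mul_sum, pow_two]
  have T2 : ∑ i, ∑ j, |B i j| * (x j)^2 ≤ C * (x ⬝ᵥ x) := by
    rw [Finset.sum_comm]
    calc ∑ j, ∑ i, |B i j| * (x j)^2
        = ∑ j, (∑ i, |B i j|) * (x j)^2 :=
          Finset.sum_congr rfl fun j _ => (Finset.sum_mul _ _ _).symm
      _ ≤ ∑ j, C * (x j)^2 :=
          Finset.sum_le_sum fun j _ => mul_le_mul_of_nonneg_right (hcol j) (sq_nonneg _)
      _ = C * (x ⬝ᵥ x) := by simp [dotProduct, Finset.mul_sum, pow_two]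
  calc ∑ i, ∑ j, x i * (B i j * x j)
      ≤ ∑ i, ∑ j, |B i j| * ((x i)^2 + (x j)^2) / 2 :=
        Finset.sum_le_sum fun i _ => Finset.sum_le_sum fun j _ => h2 i j
    _ = (∑ i, ∑ j, (|B i j| * (x i)^2 + |B i j| * (x j)^2)) / 2 := by
        rw [Finset.sum_div]
        refine Finset.sum_congr rfl fun i _ => ?_
        rw [Finset.sum_div]
        exact Finset.sum_congr rfl fun j _ => by ring
    _ = ((∑ i, ∑ j, |B i j| * (x i)^2) + (∑ i, ∑ j, |B i j| * (x j)^2)) / 2 := by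
        congr 1
        rw [← Finset.sum_add_distrib]
        exact Finset.sum_congr rfl fun i _ => Finset.sum_add_distrib
    _ ≤ (C * (x ⬝ᵥ x) + C * (x ⬝ᵥ x)) / 2 := by linarith
    _ = C * (x ⬝ᵥ x) := by ring

private lemma smul_one_sub_psd17 {B : Matrix (Fin a) (Fin a) ℝ} (hB : B.IsHermitian)
    {β : ℝ} (hβ : (∑ i, ∑ j, |B i j|) ≤ β) : (β • (1 : Matrix (Fin a) (Fin a) ℝ) - B).PosSemidef := by
  refine Matrix.PosSemidef.of_dotProduct_mulVec_nonneg ?_ ?_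
  · simp only [Matrix.IsHermitian, Matrix.conjTranspose_sub, Matrix.conjTranspose_smul,
      Matrix.conjTranspose_one, hB.eq, star_trivial]
  · intro x
    have hq := quad_bound17 B x
    have hxx : 0 ≤ x ⬝ᵥ x := Finset.sum_nonneg fun i _ => mul_self_nonneg _
    have e : (star x) ⬝ᵥ ((β • (1 : Matrix (Fin a) (Fin a) ℝ) - B) *ᵥ x)
        = β * (x ⬝ᵥ x) - x ⬝ᵥ B *ᵥ x := by
      simp [Matrix.sub_mulVec, Matrix.smul_mulVec, dotProduct_sub, dotProduct_smul,
        smul_eq_mul, star_trivial]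
    rw [e]
    have h4 : (∑ i, ∑ j, |B i j|) * (x ⬝ᵥ x) ≤ β * (x ⬝ᵥ x) :=
      mul_le_mul_of_nonneg_right hβ hxx
    linarith

end Aux17

theorem stmt_17 (m q l : ℕ)
    (L₁ : Matrix (Fin m) (Fin m) ℝ) (hL₁ : L₁.PosDef)
    (S : Matrix (Fin q) (Fin q) ℝ) (F : Matrix (Fin l) (Fin q) ℝ)
    (P : Matrix (Fin q) (Fin q) ℝ) (hP : P.PosDef)
    (hare : P * Sᵀ + S * P + 1 - P * Fᵀ * F * P = 0) :
    ∃ α₀ > (0:ℝ), ∀ α ≥ α₀,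
      (-(L₁ ⊗ₖ (P⁻¹ * S + Sᵀ * P⁻¹)
          - (2 * α + 1) • ((L₁ * L₁) ⊗ₖ (Fᵀ * F)))).PosDef := by
  have hPd : IsUnit P.det := hP.det_pos.ne'.isUnit
  have hPl : P⁻¹ * P = 1 := Matrix.nonsing_inv_mul P hPd
  have hPr : P * P⁻¹ = 1 := Matrix.mul_nonsing_inv P hPd
  have hcl : ∀ X : Matrix (Fin q) (Fin q) ℝ, P⁻¹ * (P * X) = X := by
    intro X; rw [← Matrix.mul_assoc, hPl, Matrix.one_mul]
  have h1 : P * Sᵀ + S * P + 1 = P * Fᵀ * F * P := sub_eq_zero.mp hare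
  have h3 : Fᵀ * F = P⁻¹ * (P * Sᵀ + S * P + 1) * P⁻¹ := by
    rw [h1]
    simp only [Matrix.mul_assoc, hPr, Matrix.mul_one, hcl]
  have key : P⁻¹ * S + Sᵀ * P⁻¹ = Fᵀ * F - P⁻¹ * P⁻¹ := by
    rw [h3]
    simp only [Matrix.mul_add, Matrix.add_mul, Matrix.one_mul, Matrix.mul_one,
      Matrix.mul_assoc, hcl, hPl, hPr]
    abel
  -- F^T F is PSD
  have hFtF : (Fᵀ * F).PosSemidef := by
    rw [← Matrix.conjTranspose_eq_transpose_of_trivial]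
    exact Matrix.posSemidef_conjTranspose_mul_self F
  -- P⁻¹ * P⁻¹ is PosDef
  have hQQ : (P⁻¹ * P⁻¹).PosDef := by
    refine pd_of_psd17 ?_ ?_
    · have := (Matrix.posSemidef_conjTranspose_mul_self P⁻¹)
      rwa [hP.inv.isHermitian.eq] at this
    · rw [Matrix.det_mul]
      exact (mul_pos hP.inv.det_pos hP.inv.det_pos).ne'.isUnit
  have hL₁d : IsUnit L₁.det := hL₁.det_pos.ne'.isUnit
  set C := ∑ i, ∑ j, |L₁⁻¹ i j| with hC
  have hC0 : 0 ≤ C := Finset.sum_nonneg fun i _ => Finset.sum_nonneg fun j _ => abs_nonneg _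
  refine ⟨C + 1, by linarith, fun α hα => ?_⟩
  have hβ : C ≤ 2 * α + 1 := by linarith
  -- the conjugation identity
  have hid : (2 * α + 1) • (L₁ * L₁) - L₁
      = L₁ * ((2 * α + 1) • (1 : Matrix (Fin m) (Fin m) ℝ) - L₁⁻¹) * L₁ᴴ := by
    rw [hL₁.isHermitian.eq]
    rw [Matrix.mul_sub, Matrix.sub_mul, Matrix.mul_smul, Matrix.mul_one,
      Matrix.smul_mul, Matrix.mul_nonsing_inv _ hL₁d, Matrix.one_mul]
  have hpsd1 : ((2 * α + 1) • (L₁ * L₁) - L₁).PosSemidef := by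
    rw [hid]
    exact (smul_one_sub_psd17 hL₁.inv.isHermitian hβ).mul_mul_conjTranspose_same L₁
  have hmat : -(L₁ ⊗ₖ (P⁻¹ * S + Sᵀ * P⁻¹) - (2 * α + 1) • ((L₁ * L₁) ⊗ₖ (Fᵀ * F)))
      = (((2 * α + 1) • (L₁ * L₁) - L₁) ⊗ₖ (Fᵀ * F)) + L₁ ⊗ₖ (P⁻¹ * P⁻¹) := by
    rw [key, kron_sub17, sub_kron17, Matrix.smul_kronecker]
    abel
  rw [hmat]
  exact Matrix.PosDef.posSemidef_add (psd_kron17 hpsd1 hFtF) (pd_kron17 hL₁ hQQ)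
end

section
/- Let L be the Laplacian of a directed graph on N nodes partitioned so that nodes 1..M have no in-neighbors, giving L = [[0, 0],[L₂, L₁]]. If each node in M+1..N is reachable by a directed path from some node in 1..M, then every entry of −L₁⁻¹L₂ is nonnegative and every row of −L₁⁻¹L₂ sums to 1. -/
open Matrix

lemma aux_mono_19 (M K : ℕ) (L : Matrix (Fin M ⊕ Fin K) (Fin M ⊕ Fin K) ℝ)
    (hoff : ∀ i j, i ≠ j → L i j ≤ 0)
    (hrow : ∀ i, ∑ j, L i j = 0)
    (hreach : ∀ i : Fin K, ∃ j : Fin M,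
      Relation.ReflTransGen (fun u v : Fin M ⊕ Fin K => L v u < 0) (Sum.inl j) (Sum.inr i))
    (z : Fin K → ℝ) (hz : ∀ i, 0 ≤ (L.toBlocks₂₂ *ᵥ z) i) :
    ∀ i, 0 ≤ z i := by
  by_contra hc
  push_neg at hc
  obtain ⟨i₁, hi₁⟩ := hc
  obtain ⟨i₀, -, hmin⟩ := Finset.exists_min_image Finset.univ z ⟨i₁, Finset.mem_univ i₁⟩
  set m := z i₀ with hm
  have hmneg : m < 0 := lt_of_le_of_lt (hmin i₁ (Finset.mem_univ i₁)) hi₁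
  have key : ∀ i : Fin K, z i = m →
      (∀ j : Fin M, L (Sum.inr i) (Sum.inl j) = 0) ∧
      (∀ k : Fin K, L (Sum.inr i) (Sum.inr k) < 0 → z k = m) := by
    intro i hi
    have h0 : 0 ≤ ∑ k, L (Sum.inr i) (Sum.inr k) * z k := by
      have := hz i
      simpa [Matrix.mulVec, dotProduct, Matrix.toBlocks₂₂] using this
    have hterm : ∀ k ∈ Finset.univ, L (Sum.inr i) (Sum.inr k) * z k ≤
        L (Sum.inr i) (Sum.inr k) * m := by
      intro k _
      rcases eq_or_ne k i with rfl | hk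
      · rw [hi]
      · exact mul_le_mul_of_nonpos_left (hmin k (Finset.mem_univ k))
          (hoff _ _ (by simpa using hk.symm))
    have hsum1 : ∑ k, L (Sum.inr i) (Sum.inr k) * z k ≤
        (∑ k, L (Sum.inr i) (Sum.inr k)) * m := by
      rw [Finset.sum_mul]
      exact Finset.sum_le_sum hterm
    have hrowi := hrow (Sum.inr i)
    rw [Fintype.sum_sum_type] at hrowi
    have hL2 : ∑ j, L (Sum.inr i) (Sum.inl j) ≤ 0 :=
      Finset.sum_nonpos fun j _ => hoff _ _ (by simp)
    have hS : 0 ≤ ∑ k, L (Sum.inr i) (Sum.inr k) := by linarith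
    have hupper : (∑ k, L (Sum.inr i) (Sum.inr k)) * m ≤ 0 :=
      mul_nonpos_of_nonneg_of_nonpos hS hmneg.le
    have heq1 : (∑ k, L (Sum.inr i) (Sum.inr k)) * m = 0 :=
      le_antisymm hupper (le_trans h0 hsum1)
    have hSzero : ∑ k, L (Sum.inr i) (Sum.inr k) = 0 := by
      rcases mul_eq_zero.mp heq1 with h | h
      · exact h
      · exact absurd h hmneg.ne
    have hL2zero : ∑ j, L (Sum.inr i) (Sum.inl j) = 0 := by linarith
    constructor
    · intro j
      have := (Finset.sum_eq_zero_iff_of_nonpos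
        (fun j _ => hoff (Sum.inr i) (Sum.inl j) (by simp))).mp hL2zero
      exact this j (Finset.mem_univ j)
    · intro k hk
      have heq2 : ∑ k, L (Sum.inr i) (Sum.inr k) * z k =
          ∑ k, L (Sum.inr i) (Sum.inr k) * m := by
        have hsm : ∑ k, L (Sum.inr i) (Sum.inr k) * m =
            (∑ k, L (Sum.inr i) (Sum.inr k)) * m := (Finset.sum_mul ..).symm
        linarith [le_trans h0 hsum1]
      have := (Finset.sum_eq_sum_iff_of_le hterm).mp heq2 k (Finset.mem_univ k)
      exact mul_left_cancel₀ hk.ne this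
  have main : ∀ a b, Relation.ReflTransGen (fun u v : Fin M ⊕ Fin K => L v u < 0) a b →
      ∀ k, b = Sum.inr k → z k = m → ∃ k', a = Sum.inr k' ∧ z k' = m := by
    intro a b h
    induction h with
    | refl => exact fun k hk hzk => ⟨k, hk, hzk⟩
    | @tail b c hab hbc ih =>
      intro k hk hzk
      subst hk
      obtain ⟨hA, hB⟩ := key k hzk
      cases b with
      | inl j' =>
        rw [hA j'] at hbc
        exact absurd hbc (lt_irrefl 0)
      | inr k₁ => exact ih k₁ rfl (hB k₁ hbc)
  obtain ⟨j, hpath⟩ := hreach i₀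
  obtain ⟨k', hk', -⟩ := main _ _ hpath i₀ rfl rfl
  cases hk'

theorem stmt_19 (M K : ℕ)
    (L : Matrix (Fin M ⊕ Fin K) (Fin M ⊕ Fin K) ℝ)
    (hoff : ∀ i j, i ≠ j → L i j ≤ 0)
    (hrow : ∀ i, ∑ j, L i j = 0)
    (htop : ∀ (i : Fin M) (j : Fin M ⊕ Fin K), L (Sum.inl i) j = 0)
    (hreach : ∀ i : Fin K, ∃ j : Fin M,
      Relation.ReflTransGen (fun u v : Fin M ⊕ Fin K => L v u < 0) (Sum.inl j) (Sum.inr i)) :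
    IsUnit (L.toBlocks₂₂).det ∧
      (∀ i j, 0 ≤ (-(L.toBlocks₂₂⁻¹ * L.toBlocks₂₁)) i j) ∧
      ∀ i, ∑ j, (-(L.toBlocks₂₂⁻¹ * L.toBlocks₂₁)) i j = 1 := by
  have mono := aux_mono_19 M K L hoff hrow hreach
  set L1 := L.toBlocks₂₂ with hL1
  set L2 := L.toBlocks₂₁ with hL2
  have hdet : IsUnit L1.det := by
    rw [isUnit_iff_ne_zero]
    intro h0
    obtain ⟨v, hv, hLv⟩ := Matrix.exists_mulVec_eq_zero_iff.mpr h0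
    have h1 := mono v (by intro i; rw [hLv]; exact le_refl 0)
    have h2 := mono (-v) (by intro i; rw [Matrix.mulVec_neg, hLv, neg_zero]; exact le_refl 0)
    exact hv (funext fun i => le_antisymm (by simpa using h2 i) (h1 i))
  have hinv : L1 * L1⁻¹ = 1 := Matrix.mul_nonsing_inv _ hdet
  have hinv' : L1⁻¹ * L1 = 1 := Matrix.nonsing_inv_mul _ hdet
  refine ⟨hdet, ?_, ?_⟩
  · intro i j
    set w : Fin K → ℝ := fun k => -L2 k j with hw
    have hwnn : ∀ k, 0 ≤ w k := by
      intro k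
      simp only [hw, hL2, Matrix.toBlocks₂₁, Matrix.of_apply]
      have := hoff (Sum.inr k) (Sum.inl j) (by simp)
      linarith
    have hLw : L1 *ᵥ (L1⁻¹ *ᵥ w) = w := by
      rw [Matrix.mulVec_mulVec, hinv, Matrix.one_mulVec]
    have hnn := mono (L1⁻¹ *ᵥ w) (by intro kk; rw [hLw]; exact hwnn kk) i
    have heq : (-(L1⁻¹ * L2)) i j = (L1⁻¹ *ᵥ w) i := by
      simp [Matrix.neg_apply, Matrix.mul_apply, Matrix.mulVec, dotProduct, hw, mul_neg,
        Finset.sum_neg_distrib]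
    rw [heq]
    exact hnn
  · intro i
    have h1 : ∑ j, (-(L1⁻¹ * L2)) i j = ((-(L1⁻¹ * L2)) *ᵥ fun _ => (1 : ℝ)) i := by
      simp [Matrix.mulVec, dotProduct]
    have h3 : (-L2) *ᵥ (fun _ => (1 : ℝ)) = L1 *ᵥ (fun _ => (1 : ℝ)) := by
      funext k
      have := hrow (Sum.inr k)
      rw [Fintype.sum_sum_type] at this
      simp only [Matrix.mulVec, dotProduct, Matrix.neg_apply, mul_one, hL1, hL2,
        Matrix.toBlocks₂₁, Matrix.toBlocks₂₂, Matrix.of_apply, Finset.sum_neg_distrib]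
      linarith
    have h2 : (-(L1⁻¹ * L2)) *ᵥ (fun _ => (1 : ℝ)) = fun _ => (1 : ℝ) := by
      rw [← Matrix.mul_neg, ← Matrix.mulVec_mulVec, h3, Matrix.mulVec_mulVec, hinv',
        Matrix.one_mulVec]
    rw [h1, h2]
end
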